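/- Let Ω ⊆ ℝ^3 be open and u ∈ BV_H(Ω) with respect to the horizontal vector fields of ℍ¹, with μ = (μ_1, μ_2) representing D_H u = (X u, Y u). Then μ satisfies the second-order horizontal curl equations of ℍ¹ in the sense of distributions: for every φ ∈ C_c^∞(Ω), (1) ∫ (X Y φ) dμ_1 − 2 ∫ (Y X φ) dμ_1 + ∫ (X X φ) dμ_2 = 0, and (2) ∫ (Y Y φ) dμ_1 − 2 ∫ (X Y φ) dμ_2 + ∫ (Y X φ) dμ_2 = 0 (these are the distributional forms of Y X μ_1 − 2 X Y μ_1 + X X μ_2 = 0 and Y Y μ_1 − 2 Y X μ_2 + X Y μ_2 = 0). -/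

import Mathlib

open MeasureTheory Real
open scoped ENNReal NNReal

noncomputable section

/-- Partial derivative of `f : ℝⁿ → ℝ` in the `j`-th coordinate direction. -/
def pd {n : ℕ} (j : Fin n) (f : (Fin n → ℝ) → ℝ) (x : Fin n → ℝ) : ℝ :=
  fderiv ℝ f x (Pi.single j 1)

/-- Integral of `f` with respect to a signed measure, via the Jordan decomposition. -/
def sint {α : Type*} [MeasurableSpace α] (μ : SignedMeasure α) (f : α → ℝ) : ℝ :=
  (∫ x, f x ∂μ.toJordanDecomposition.posPart) - ∫ x, f x ∂μ.toJordanDecomposition.negPart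

/-- `φ` is a C¹ function with compact support contained in the open set `U`. -/
def IsCc1 {E : Type*} [NormedAddCommGroup E] [NormedSpace ℝ E] (U : Set E) (φ : E → ℝ) : Prop :=
  ContDiff ℝ 1 φ ∧ HasCompactSupport φ ∧ tsupport φ ⊆ U

/-! ℍ¹ in exponential coordinates `(x, y, t) : Fin 3 → ℝ` (indices `0, 1, 2`); the horizontal
vector fields are `X = ∂_x - (y/2) ∂_t` and `Y = ∂_y + (x/2) ∂_t`. -/

/-- `X = ∂_x - (y/2) ∂_t` acting on functions on ℍ¹. -/
def H1X (φ : (Fin 3 → ℝ) → ℝ) (p : Fin 3 → ℝ) : ℝ := pd 0 φ p - p 1 / 2 * pd 2 φ p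

/-- `Y = ∂_y + (x/2) ∂_t`. -/
def H1Y (φ : (Fin 3 → ℝ) → ℝ) (p : Fin 3 → ℝ) : ℝ := pd 1 φ p + p 0 / 2 * pd 2 φ p

/-- The `ℝ²`-valued measure `μ = (μ₁, μ₂)` represents `D_H u = (Xu, Yu)` on `Ω ⊆ ℍ¹`. -/
def RepH1 (Ω : Set (Fin 3 → ℝ)) (u : (Fin 3 → ℝ) → ℝ)
    (μ : Fin 2 → SignedMeasure (Fin 3 → ℝ)) : Prop :=
  (∀ i s, μ i s = μ i (s ∩ Ω)) ∧
  ∀ φ : Fin 2 → (Fin 3 → ℝ) → ℝ, (∀ i, IsCc1 Ω (φ i)) →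
    (∑ i, sint (μ i) (φ i)) = ∫ x in Ω, u x * (H1X (φ 0) x + H1Y (φ 1) x) ∂volume


lemma pd_contDiff {n : ℕ} {f : (Fin n → ℝ) → ℝ} (hf : ContDiff ℝ (⊤ : ℕ∞) f) (j : Fin n) :
    ContDiff ℝ (⊤ : ℕ∞) (pd j f) := by
  have h1 : ContDiff ℝ (⊤ : ℕ∞) (fderiv ℝ f) := hf.fderiv_right (by simp)
  exact (ContinuousLinearMap.apply ℝ ℝ (Pi.single j 1)).contDiff.comp h1

lemma smdiff {n : ℕ} {f : (Fin n → ℝ) → ℝ} (hf : ContDiff ℝ (⊤ : ℕ∞) f) :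
    Differentiable ℝ f := hf.differentiable (by norm_cast)

lemma pd_diffAt {n : ℕ} {f : (Fin n → ℝ) → ℝ} (hf : ContDiff ℝ (⊤ : ℕ∞) f) (j : Fin n)
    (x : Fin n → ℝ) : DifferentiableAt ℝ (pd j f) x :=
  (smdiff (pd_contDiff hf j)).differentiableAt

lemma pd_add {n : ℕ} {f g : (Fin n → ℝ) → ℝ} {x : Fin n → ℝ} (j : Fin n)
    (hf : DifferentiableAt ℝ f x) (hg : DifferentiableAt ℝ g x) :
    pd j (fun p => f p + g p) x = pd j f x + pd j g x := by
  simp [pd, fderiv_fun_add hf hg]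

lemma pd_sub {n : ℕ} {f g : (Fin n → ℝ) → ℝ} {x : Fin n → ℝ} (j : Fin n)
    (hf : DifferentiableAt ℝ f x) (hg : DifferentiableAt ℝ g x) :
    pd j (fun p => f p - g p) x = pd j f x - pd j g x := by
  simp [pd, fderiv_fun_sub hf hg]

lemma pd_const_mul {n : ℕ} {f : (Fin n → ℝ) → ℝ} {x : Fin n → ℝ} (j : Fin n) (c : ℝ)
    (hf : DifferentiableAt ℝ f x) :
    pd j (fun p => c * f p) x = c * pd j f x := by
  simp [pd, fderiv_const_mul hf c]

lemma pd_mul {n : ℕ} {f g : (Fin n → ℝ) → ℝ} {x : Fin n → ℝ} (j : Fin n)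
    (hf : DifferentiableAt ℝ f x) (hg : DifferentiableAt ℝ g x) :
    pd j (fun p => f p * g p) x = pd j f x * g x + f x * pd j g x := by
  simp [pd, fderiv_fun_mul hf hg]; ring

lemma pd_coord {n : ℕ} (j i : Fin n) (x : Fin n → ℝ) :
    pd j (fun p => p i) x = if i = j then 1 else 0 := by
  have : (fun p : Fin n → ℝ => p i)
      = (ContinuousLinearMap.proj (R := ℝ) (φ := fun _ : Fin n => ℝ) i) := rfl
  rw [pd, this, ContinuousLinearMap.fderiv]
  simp [Pi.single_apply]

lemma pd_div_const {n : ℕ} {f : (Fin n → ℝ) → ℝ} {x : Fin n → ℝ} (j : Fin n) (c : ℝ)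
    (hf : DifferentiableAt ℝ f x) :
    pd j (fun p => f p / c) x = pd j f x / c := by
  simp [pd, fderiv_mul_const hf (c⁻¹), div_eq_mul_inv]; ring

lemma pd_comm {n : ℕ} {f : (Fin n → ℝ) → ℝ} (hf : ContDiff ℝ (⊤ : ℕ∞) f) (i j : Fin n)
    (x : Fin n → ℝ) : pd i (pd j f) x = pd j (pd i f) x := by
  have hsymm : IsSymmSndFDerivAt ℝ f x :=
    (hf.contDiffAt).isSymmSndFDerivAt (by rw [minSmoothness_of_isRCLikeNormedField]; exact WithTop.coe_le_coe.mpr le_top)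
  have hd : DifferentiableAt ℝ (fderiv ℝ f) x :=
    (((hf.fderiv_right (m := (⊤:ℕ∞)) (by simp)).differentiable (by simp))).differentiableAt
  have key : ∀ v : Fin n → ℝ, ∀ w, fderiv ℝ (fun y => fderiv ℝ f y v) x w
      = fderiv ℝ (fderiv ℝ f) x w v := by
    intro v w
    rw [fderiv_clm_apply hd (differentiableAt_const v)]
    simp
  show fderiv ℝ (fun y => fderiv ℝ f y (Pi.single j 1)) x (Pi.single i 1)
      = fderiv ℝ (fun y => fderiv ℝ f y (Pi.single i 1)) x (Pi.single j 1)
  rw [key, key, hsymm]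

-- derivative of `p ↦ p i / 2 * g p`
lemma pd_coordmul {g : (Fin 3 → ℝ) → ℝ} (hg : ContDiff ℝ (⊤ : ℕ∞) g) (i j : Fin 3)
    (x : Fin 3 → ℝ) :
    pd j (fun p => p i / 2 * g p) x
      = (if i = j then 1 else 0) / 2 * g x + x i / 2 * pd j g x := by
  have hc : ContDiff ℝ (⊤ : ℕ∞) (fun p : Fin 3 → ℝ => p i / 2) :=
    ((ContinuousLinearMap.proj (R := ℝ) (φ := fun _ : Fin 3 => ℝ) i).contDiff).div_const 2
  have hco : DifferentiableAt ℝ (fun p : Fin 3 → ℝ => p i) x :=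
    ((ContinuousLinearMap.proj (R := ℝ) (φ := fun _ : Fin 3 => ℝ) i).contDiff (n := ((⊤ : ℕ∞) : WithTop ℕ∞)).differentiable (by simp)).differentiableAt
  rw [pd_mul j (smdiff hc).differentiableAt (smdiff hg).differentiableAt]
  rw [pd_div_const j 2 hco, pd_coord]

lemma coordmul_contDiff {g : (Fin 3 → ℝ) → ℝ} (hg : ContDiff ℝ (⊤ : ℕ∞) g) (i : Fin 3) :
    ContDiff ℝ (⊤ : ℕ∞) (fun p : Fin 3 → ℝ => p i / 2 * g p) :=
  (((ContinuousLinearMap.proj (R := ℝ) (φ := fun _ : Fin 3 => ℝ) i).contDiff).div_const 2).mul hg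

lemma H1X_contDiff {f : (Fin 3 → ℝ) → ℝ} (hf : ContDiff ℝ (⊤ : ℕ∞) f) :
    ContDiff ℝ (⊤ : ℕ∞) (H1X f) :=
  (pd_contDiff hf 0).sub (coordmul_contDiff (pd_contDiff hf 2) 1)

lemma H1Y_contDiff {f : (Fin 3 → ℝ) → ℝ} (hf : ContDiff ℝ (⊤ : ℕ∞) f) :
    ContDiff ℝ (⊤ : ℕ∞) (H1Y f) :=
  (pd_contDiff hf 1).add (coordmul_contDiff (pd_contDiff hf 2) 0)

lemma pd_H1X {f : (Fin 3 → ℝ) → ℝ} (hf : ContDiff ℝ (⊤ : ℕ∞) f) (j : Fin 3) (x : Fin 3 → ℝ) :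
    pd j (H1X f) x = pd j (pd 0 f) x
      - ((if (1 : Fin 3) = j then 1 else 0) / 2 * pd 2 f x + x 1 / 2 * pd j (pd 2 f) x) := by
  have : H1X f = fun p => pd 0 f p - p 1 / 2 * pd 2 f p := rfl
  rw [this, pd_sub j (pd_diffAt hf 0 x)
    (smdiff (coordmul_contDiff (pd_contDiff hf 2) 1)).differentiableAt,
    pd_coordmul (pd_contDiff hf 2) 1 j x]

lemma pd_H1Y {f : (Fin 3 → ℝ) → ℝ} (hf : ContDiff ℝ (⊤ : ℕ∞) f) (j : Fin 3) (x : Fin 3 → ℝ) :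
    pd j (H1Y f) x = pd j (pd 1 f) x
      + ((if (0 : Fin 3) = j then 1 else 0) / 2 * pd 2 f x + x 0 / 2 * pd j (pd 2 f) x) := by
  have : H1Y f = fun p => pd 1 f p + p 0 / 2 * pd 2 f p := rfl
  rw [this, pd_add j (pd_diffAt hf 1 x)
    (smdiff (coordmul_contDiff (pd_contDiff hf 2) 0)).differentiableAt,
    pd_coordmul (pd_contDiff hf 2) 0 j x]

/-- `[X, Y] = ∂_t`. -/
lemma commXY {f : (Fin 3 → ℝ) → ℝ} (hf : ContDiff ℝ (⊤ : ℕ∞) f) :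
    H1X (H1Y f) = fun x => H1Y (H1X f) x + pd 2 f x := by
  funext x
  show pd 0 (H1Y f) x - x 1 / 2 * pd 2 (H1Y f) x
    = (pd 1 (H1X f) x + x 0 / 2 * pd 2 (H1X f) x) + pd 2 f x
  rw [pd_H1Y hf 0 x, pd_H1Y hf 2 x, pd_H1X hf 1 x, pd_H1X hf 2 x]
  norm_num [Fin.ext_iff]
  rw [pd_comm hf 0 1, pd_comm hf 0 2, pd_comm hf 1 2]
  ring

/-- `X ∂_t = ∂_t X`. -/
lemma commXT {f : (Fin 3 → ℝ) → ℝ} (hf : ContDiff ℝ (⊤ : ℕ∞) f) (x : Fin 3 → ℝ) :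
    H1X (pd 2 f) x = pd 2 (H1X f) x := by
  show pd 0 (pd 2 f) x - x 1 / 2 * pd 2 (pd 2 f) x = _
  rw [pd_H1X hf 2 x]
  norm_num [Fin.ext_iff]
  rw [pd_comm hf 0 2]

/-- `Y ∂_t = ∂_t Y`. -/
lemma commYT {f : (Fin 3 → ℝ) → ℝ} (hf : ContDiff ℝ (⊤ : ℕ∞) f) (x : Fin 3 → ℝ) :
    H1Y (pd 2 f) x = pd 2 (H1Y f) x := by
  show pd 1 (pd 2 f) x + x 0 / 2 * pd 2 (pd 2 f) x = _
  rw [pd_H1Y hf 2 x]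
  norm_num [Fin.ext_iff]
  rw [pd_comm hf 1 2]

-- support lemmas
lemma pd_zero_of_not_mem {n : ℕ} {f : (Fin n → ℝ) → ℝ} {x : Fin n → ℝ}
    (hx : x ∉ tsupport f) (j : Fin n) : pd j f x = 0 := by
  have hev : f =ᶠ[nhds x] (fun _ => (0:ℝ)) := by
    filter_upwards [(isClosed_tsupport f).isOpen_compl.mem_nhds hx] with y hy
    exact image_eq_zero_of_notMem_tsupport hy
  rw [pd, hev.fderiv_eq, fderiv_fun_const]
  simp

lemma tsupport_subset_of_zero {α : Type*} [TopologicalSpace α] {f : α → ℝ} {s : Set α}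
    (hs : IsClosed s) (h : ∀ x ∉ s, f x = 0) : tsupport f ⊆ s :=
  closure_minimal (fun x hx => by by_contra hxs; exact hx (h x hxs)) hs

lemma H1X_zero_of_not_mem {f : (Fin 3 → ℝ) → ℝ} {x : Fin 3 → ℝ}
    (hx : x ∉ tsupport f) : H1X f x = 0 := by
  simp [H1X, pd_zero_of_not_mem hx]

lemma H1Y_zero_of_not_mem {f : (Fin 3 → ℝ) → ℝ} {x : Fin 3 → ℝ}
    (hx : x ∉ tsupport f) : H1Y f x = 0 := by
  simp [H1Y, pd_zero_of_not_mem hx]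

lemma tsupport_H1X {f : (Fin 3 → ℝ) → ℝ} : tsupport (H1X f) ⊆ tsupport f :=
  tsupport_subset_of_zero (isClosed_tsupport f) (fun _ hx => H1X_zero_of_not_mem hx)

lemma tsupport_H1Y {f : (Fin 3 → ℝ) → ℝ} : tsupport (H1Y f) ⊆ tsupport f :=
  tsupport_subset_of_zero (isClosed_tsupport f) (fun _ hx => H1Y_zero_of_not_mem hx)

-- sint lemmas
lemma sint_sub2 {α : Type*} [MeasurableSpace α] [TopologicalSpace α] [OpensMeasurableSpace α]
    [T2Space α] (μ : SignedMeasure α) {f g : α → ℝ}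
    (hf : Continuous f) (hfc : HasCompactSupport f)
    (hg : Continuous g) (hgc : HasCompactSupport g) :
    sint μ (fun x => f x - 2 * g x) = sint μ f - 2 * sint μ g := by
  have i1 : Integrable f μ.toJordanDecomposition.posPart := hf.integrable_of_hasCompactSupport hfc
  have i2 : Integrable f μ.toJordanDecomposition.negPart := hf.integrable_of_hasCompactSupport hfc
  have i3 : Integrable g μ.toJordanDecomposition.posPart := hg.integrable_of_hasCompactSupport hgc
  have i4 : Integrable g μ.toJordanDecomposition.negPart := hg.integrable_of_hasCompactSupport hgc
  simp only [sint, integral_sub i1 (i3.const_mul 2), integral_sub i2 (i4.const_mul 2),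
    integral_const_mul]
  ring

-- linearity of the horizontal fields
lemma H1X_add {a b : (Fin 3 → ℝ) → ℝ} (ha : ContDiff ℝ (⊤ : ℕ∞) a)
    (hb : ContDiff ℝ (⊤ : ℕ∞) b) (x : Fin 3 → ℝ) :
    H1X (fun p => a p + b p) x = H1X a x + H1X b x := by
  simp only [H1X]
  rw [pd_add 0 (smdiff ha).differentiableAt (smdiff hb).differentiableAt,
    pd_add 2 (smdiff ha).differentiableAt (smdiff hb).differentiableAt]
  ring

lemma H1Y_add {a b : (Fin 3 → ℝ) → ℝ} (ha : ContDiff ℝ (⊤ : ℕ∞) a)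
    (hb : ContDiff ℝ (⊤ : ℕ∞) b) (x : Fin 3 → ℝ) :
    H1Y (fun p => a p + b p) x = H1Y a x + H1Y b x := by
  simp only [H1Y]
  rw [pd_add 1 (smdiff ha).differentiableAt (smdiff hb).differentiableAt,
    pd_add 2 (smdiff ha).differentiableAt (smdiff hb).differentiableAt]
  ring

lemma H1X_sub2 {a b : (Fin 3 → ℝ) → ℝ} (ha : ContDiff ℝ (⊤ : ℕ∞) a)
    (hb : ContDiff ℝ (⊤ : ℕ∞) b) (x : Fin 3 → ℝ) :
    H1X (fun p => a p - 2 * b p) x = H1X a x - 2 * H1X b x := by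
  simp only [H1X]
  rw [pd_sub 0 (smdiff ha).differentiableAt (((smdiff hb) x).const_mul 2),
    pd_sub 2 (smdiff ha).differentiableAt (((smdiff hb) x).const_mul 2),
    pd_const_mul 0 2 (smdiff hb).differentiableAt,
    pd_const_mul 2 2 (smdiff hb).differentiableAt]
  ring

lemma H1Y_sub2 {a b : (Fin 3 → ℝ) → ℝ} (ha : ContDiff ℝ (⊤ : ℕ∞) a)
    (hb : ContDiff ℝ (⊤ : ℕ∞) b) (x : Fin 3 → ℝ) :
    H1Y (fun p => a p - 2 * b p) x = H1Y a x - 2 * H1Y b x := by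
  simp only [H1Y]
  rw [pd_sub 1 (smdiff ha).differentiableAt (((smdiff hb) x).const_mul 2),
    pd_sub 2 (smdiff ha).differentiableAt (((smdiff hb) x).const_mul 2),
    pd_const_mul 1 2 (smdiff hb).differentiableAt,
    pd_const_mul 2 2 (smdiff hb).differentiableAt]
  ring

/-- The components of `D_H u` of a `BV_H` function on `Ω ⊆ ℍ¹` satisfy the second-order
horizontal curl equations in the sense of distributions. -/
theorem horizontal_curl_H1 (Ω : Set (Fin 3 → ℝ)) (hΩ : IsOpen Ω)
    (u : (Fin 3 → ℝ) → ℝ) (hu : IntegrableOn u Ω volume)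
    (μ : Fin 2 → SignedMeasure (Fin 3 → ℝ)) (hμ : RepH1 Ω u μ) :
    ∀ φ : (Fin 3 → ℝ) → ℝ, ContDiff ℝ (⊤ : ℕ∞) φ → HasCompactSupport φ → tsupport φ ⊆ Ω →
      (sint (μ 0) (H1X (H1Y φ)) - 2 * sint (μ 0) (H1Y (H1X φ)) + sint (μ 1) (H1X (H1X φ))
        = 0) ∧
      (sint (μ 0) (H1Y (H1Y φ)) - 2 * sint (μ 1) (H1X (H1Y φ)) + sint (μ 1) (H1Y (H1X φ))
        = 0) := by
  intro φ hφ hφc hφΩ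
  have hψ : ContDiff ℝ (⊤ : ℕ∞) (H1X φ) := H1X_contDiff hφ
  have hχ : ContDiff ℝ (⊤ : ℕ∞) (H1Y φ) := H1Y_contDiff hφ
  have mksup : ∀ {f : (Fin 3 → ℝ) → ℝ}, tsupport f ⊆ tsupport φ → HasCompactSupport f :=
    fun h => IsCompact.of_isClosed_subset hφc (isClosed_tsupport _) h
  have mkcc : ∀ {f : (Fin 3 → ℝ) → ℝ}, ContDiff ℝ (⊤ : ℕ∞) f → tsupport f ⊆ tsupport φ →
      IsCc1 Ω f := fun hf h =>
    ⟨hf.of_le (by exact_mod_cast (le_top : (1 : ℕ∞) ≤ ⊤)), mksup h, h.trans hφΩ⟩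
  have s_xy : tsupport (H1X (H1Y φ)) ⊆ tsupport φ := tsupport_H1X.trans tsupport_H1Y
  have s_yx : tsupport (H1Y (H1X φ)) ⊆ tsupport φ := tsupport_H1Y.trans tsupport_H1X
  have s_xx : tsupport (H1X (H1X φ)) ⊆ tsupport φ := tsupport_H1X.trans tsupport_H1X
  have s_yy : tsupport (H1Y (H1Y φ)) ⊆ tsupport φ := tsupport_H1Y.trans tsupport_H1Y
  constructor
  · -- first curl equation
    set f1 : (Fin 3 → ℝ) → ℝ := fun p => H1X (H1Y φ) p - 2 * H1Y (H1X φ) p with hf1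
    have s_f1 : tsupport f1 ⊆ tsupport φ := by
      refine tsupport_subset_of_zero (isClosed_tsupport φ) fun x hx => ?_
      have h1 : H1X (H1Y φ) x = 0 := H1X_zero_of_not_mem fun h => hx (tsupport_H1Y h)
      have h2 : H1Y (H1X φ) x = 0 := H1Y_zero_of_not_mem fun h => hx (tsupport_H1X h)
      simp [hf1, h1, h2]
    have hf1sm : ContDiff ℝ (⊤ : ℕ∞) f1 :=
      (H1X_contDiff hχ).sub (contDiff_const.mul (H1Y_contDiff hψ))
    have hrep := hμ.2 ![f1, H1X (H1X φ)] (by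
      intro i; fin_cases i
      · simpa using mkcc hf1sm s_f1
      · simpa using mkcc (H1X_contDiff hψ) s_xx)
    simp only [Fin.sum_univ_two, Matrix.cons_val_zero, Matrix.cons_val_one,
      Matrix.head_cons] at hrep
    have hzero : ∀ x, H1X f1 x + H1Y (H1X (H1X φ)) x = 0 := by
      intro x
      have h1 : H1X f1 x = H1X (H1X (H1Y φ)) x - 2 * H1X (H1Y (H1X φ)) x :=
        H1X_sub2 (H1X_contDiff hχ) (H1Y_contDiff hψ) x
      have h2 : H1X (H1X (H1Y φ)) x
          = H1Y (H1X (H1X φ)) x + 2 * pd 2 (H1X φ) x := by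
        conv_lhs => rw [commXY hφ]
        rw [H1X_add (H1Y_contDiff hψ) (pd_contDiff hφ 2) x, congrFun (commXY hψ) x,
          commXT hφ x]
        ring
      have h3 : H1X (H1Y (H1X φ)) x = H1Y (H1X (H1X φ)) x + pd 2 (H1X φ) x :=
        congrFun (commXY hψ) x
      rw [h1, h2, h3]; ring
    simp only [hzero, mul_zero, integral_zero] at hrep
    have hsplit : sint (μ 0) f1
        = sint (μ 0) (H1X (H1Y φ)) - 2 * sint (μ 0) (H1Y (H1X φ)) :=
      sint_sub2 (μ 0) (H1X_contDiff hχ).continuous (mksup s_xy)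
        (H1Y_contDiff hψ).continuous (mksup s_yx)
    rw [hsplit] at hrep
    linarith
  · -- second curl equation
    set g2 : (Fin 3 → ℝ) → ℝ := fun p => H1Y (H1X φ) p - 2 * H1X (H1Y φ) p with hg2
    have s_g2 : tsupport g2 ⊆ tsupport φ := by
      refine tsupport_subset_of_zero (isClosed_tsupport φ) fun x hx => ?_
      have h1 : H1Y (H1X φ) x = 0 := H1Y_zero_of_not_mem fun h => hx (tsupport_H1X h)
      have h2 : H1X (H1Y φ) x = 0 := H1X_zero_of_not_mem fun h => hx (tsupport_H1Y h)
      simp [hg2, h1, h2]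
    have hg2sm : ContDiff ℝ (⊤ : ℕ∞) g2 :=
      (H1Y_contDiff hψ).sub (contDiff_const.mul (H1X_contDiff hχ))
    have hrep := hμ.2 ![H1Y (H1Y φ), g2] (by
      intro i; fin_cases i
      · simpa using mkcc (H1Y_contDiff hχ) s_yy
      · simpa using mkcc hg2sm s_g2)
    simp only [Fin.sum_univ_two, Matrix.cons_val_zero, Matrix.cons_val_one,
      Matrix.head_cons] at hrep
    have hzero : ∀ x, H1X (H1Y (H1Y φ)) x + H1Y g2 x = 0 := by
      intro x
      have h1 : H1Y g2 x = H1Y (H1Y (H1X φ)) x - 2 * H1Y (H1X (H1Y φ)) x :=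
        H1Y_sub2 (H1Y_contDiff hψ) (H1X_contDiff hχ) x
      have h2 : H1X (H1Y (H1Y φ)) x = H1Y (H1X (H1Y φ)) x + pd 2 (H1Y φ) x :=
        congrFun (commXY hχ) x
      have h3 : H1Y (H1X (H1Y φ)) x = H1Y (H1Y (H1X φ)) x + pd 2 (H1Y φ) x := by
        conv_lhs => rw [commXY hφ]
        rw [H1Y_add (H1Y_contDiff hψ) (pd_contDiff hφ 2) x, commYT hφ x]
      rw [h1, h2, h3]; ring
    simp only [hzero, mul_zero, integral_zero] at hrep
    have hsplit : sint (μ 1) g2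
        = sint (μ 1) (H1Y (H1X φ)) - 2 * sint (μ 1) (H1X (H1Y φ)) :=
      sint_sub2 (μ 1) (H1Y_contDiff hψ).continuous (mksup s_yx)
        (H1X_contDiff hχ).continuous (mksup s_xy)
    rw [hsplit] at hrep
    linarith


end
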